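/- Let G = (V,E) be a finite simple graph and B a 2-branch of G whose K-join decomposition consists of p ≥ k + 4 K-joins, and suppose the attachment cliques B_1 and B_2 of B belong to the same connected component of the induced subgraph G[V ∖ B^R]. Then G admits no k-completion. -/

import Mathlib

open SimpleGraph Finset

variable {V : Type*}

/-- `f` is an (injective, hence linear) umbrella ordering of the graph `G`. -/
def IsUmbrellaOrdering (G : SimpleGraph V) (f : V → ℕ) : Prop :=
  Function.Injective f ∧
    ∀ u v w : V, f u < f v → f v < f w → G.Adj u w → G.Adj u v ∧ G.Adj v w

/-- A graph is a proper interval graph iff it admits an umbrella ordering. -/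
def IsProperIntervalGraph (G : SimpleGraph V) : Prop :=
  ∃ f : V → ℕ, IsUmbrellaOrdering G f

/-- The graph `G + F` obtained by adding the set `F` of pairs as edges. -/
def addEdges (G : SimpleGraph V) (F : Finset (Sym2 V)) : SimpleGraph V :=
  G ⊔ SimpleGraph.fromEdgeSet ↑F

/-- `F` is a completion of `G`: a set of non-loop non-edges whose addition
makes `G` a proper interval graph. -/
def IsCompletion (G : SimpleGraph V) (F : Finset (Sym2 V)) : Prop :=
  (∀ e ∈ F, ¬ e.IsDiag) ∧ (∀ e ∈ F, e ∉ G.edgeSet) ∧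
    IsProperIntervalGraph (addEdges G F)

/-- `F` is a `k`-completion of `G`. -/
def IsKCompletion (G : SimpleGraph V) (k : ℕ) (F : Finset (Sym2 V)) : Prop :=
  IsCompletion G F ∧ F.card ≤ k

/-- `uv` is an extremal edge of `G` with respect to the ordering `f`. -/
def IsExtremalEdge (G : SimpleGraph V) (f : V → ℕ) (u v : V) : Prop :=
  G.Adj u v ∧ f u < f v ∧
    ∀ u' v' : V, G.Adj u' v' → f u' ≤ f u → f v ≤ f v' → u' = u ∧ v' = v

/-- `c` is the center and `l₁, l₂, l₃` the leaves of an induced claw of `G`. -/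
def IsClaw (G : SimpleGraph V) (c l₁ l₂ l₃ : V) : Prop :=
  G.Adj c l₁ ∧ G.Adj c l₂ ∧ G.Adj c l₃ ∧
    ¬ G.Adj l₁ l₂ ∧ ¬ G.Adj l₁ l₃ ∧ ¬ G.Adj l₂ l₃ ∧ l₁ ≠ l₂ ∧ l₁ ≠ l₃ ∧ l₂ ≠ l₃

/-- `a b c d` is an induced 4-cycle of `G` (in this cyclic order). -/
def IsInducedC4 (G : SimpleGraph V) (a b c d : V) : Prop :=
  G.Adj a b ∧ G.Adj b c ∧ G.Adj c d ∧ G.Adj d a ∧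
    ¬ G.Adj a c ∧ ¬ G.Adj b d ∧ a ≠ c ∧ b ≠ d

/-- `x` belongs to some claw of `G` (as center or leaf). -/
def InClaw (G : SimpleGraph V) (x : V) : Prop :=
  ∃ a b c d, IsClaw G a b c d ∧ (x = a ∨ x = b ∨ x = c ∨ x = d)

/-- `x` belongs to some induced 4-cycle of `G`. -/
def InC4 (G : SimpleGraph V) (x : V) : Prop :=
  ∃ a b c d, IsInducedC4 G a b c d ∧ (x = a ∨ x = b ∨ x = c ∨ x = d)

/-- `{x, y, z}` is an independent set of size 3 (a `3K₁`) of `G`. -/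
def IsInd3 (G : SimpleGraph V) (x y z : V) : Prop :=
  x ≠ y ∧ x ≠ z ∧ y ≠ z ∧ ¬ G.Adj x y ∧ ¬ G.Adj x z ∧ ¬ G.Adj y z

/-- `x` belongs to some independent set of size 3 of `G`. -/
def InInd3 (G : SimpleGraph V) (x : V) : Prop := ∃ y z, IsInd3 G x y z

/-- `G` is sunflower-reduced (for the parameter `k`). -/
def SunflowerReduced (G : SimpleGraph V) (k : ℕ) : Prop :=
  ∀ u v : V, u ≠ v → ¬ G.Adj u v →
    {w : V | ∃ c, IsClaw G c u v w}.ncard ≤ k ∧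
    {e : Sym2 V | ∃ a b, e = s(a, b) ∧ IsInducedC4 G u a v b}.ncard ≤ k

/-- `u` and `v` are true twins of `G`: they have the same closed neighborhood. -/
def TrueTwins (G : SimpleGraph V) (u v : V) : Prop :=
  insert u (G.neighborSet u) = insert v (G.neighborSet v)

/-- `b : Fin p → V` enumerates a `K`-join of `G` whose complement is
partitioned into `N`, `L`, `R`, `C`. -/
structure KJoinWith (G : SimpleGraph V) {p : ℕ} (b : Fin p → V)
    (N L R C : Set V) : Prop where
  inj : Function.Injective b
  clique : ∀ i j : Fin p, i ≠ j → G.Adj (b i) (b j)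
  cover : ∀ v : V, v ∉ Set.range b → v ∈ N ∪ L ∪ R ∪ C
  disj : List.Pairwise Disjoint [Set.range b, N, L, R, C]
  nAdj : ∀ v ∈ N, ∀ i, G.Adj v (b i)
  cNotAdj : ∀ v ∈ C, ∀ i, ¬ G.Adj v (b i)
  lrAdj : ∀ v ∈ L ∪ R, ∃ i, G.Adj v (b i)
  lrNotAll : ∀ v ∈ L ∪ R, ∃ i, ¬ G.Adj v (b i)
  rFirst : ∀ r ∈ R, ∀ i : Fin p, i.val = 0 → ¬ G.Adj r (b i)
  lLast : ∀ x ∈ L, ∀ i : Fin p, i.val = p - 1 → ¬ G.Adj x (b i)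
  rMono : ∀ i j : Fin p, i.val + 1 = j.val → ∀ r ∈ R, G.Adj (b i) r → G.Adj (b j) r
  lMono : ∀ i j : Fin p, i.val + 1 = j.val → ∀ x ∈ L, G.Adj (b j) x → G.Adj (b i) x

/-- `B ⊆ V` is a `K`-join of `G`. -/
def IsKJoin (G : SimpleGraph V) (B : Set V) : Prop :=
  ∃ (p : ℕ) (b : Fin p → V) (N L R C : Set V),
    Set.range b = B ∧ KJoinWith G b N L R C

/-- `B` is a clean `K`-join: none of its vertices belongs to a claw or an
induced 4-cycle of `G`. -/
def IsCleanKJoin (G : SimpleGraph V) (B : Set V) : Prop :=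
  IsKJoin G B ∧ ∀ x ∈ B, ¬ InClaw G x ∧ ¬ InC4 G x

/-- `B ⊆ V` is a simple `K`-join of `G` (one of `L`, `R` is empty). -/
def IsSimpleKJoin (G : SimpleGraph V) (B : Set V) : Prop :=
  ∃ (p : ℕ) (b : Fin p → V) (N L R C : Set V),
    Set.range b = B ∧ KJoinWith G b N L R C ∧ (L = ∅ ∨ R = ∅)

/-- `B` is bcc-clean: none of its vertices belongs to a `3K₁` or an induced
4-cycle of `G`. -/
def IsBccClean (G : SimpleGraph V) (B : Set V) : Prop :=
  ∀ x ∈ B, ¬ InInd3 G x ∧ ¬ InC4 G x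

/-- `b : Fin p → V` enumerates (in umbrella order) a 1-branch of `G` with
complement partitioned into `R`, `C`; `b l` is the neighbor of the last
vertex `b (p-1)` of minimal index.  The attachment clique is
`B₁ = {b i : l ≤ i}` and `B^R = {b i : i < l}`. -/
structure OneBranch (G : SimpleGraph V) {p : ℕ} (b : Fin p → V)
    (R C : Set V) (l : Fin p) : Prop where
  pos : 0 < p
  inj : Function.Injective b
  umbrella : ∀ i j m : Fin p, i < j → j < m → G.Adj (b i) (b m) →
    G.Adj (b i) (b j) ∧ G.Adj (b j) (b m)
  connB : (G.induce (Set.range b)).Connected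
  cover : ∀ v : V, v ∉ Set.range b → v ∈ R ∪ C
  disj : List.Pairwise Disjoint [Set.range b, R, C]
  noBC : ∀ v ∈ C, ∀ i, ¬ G.Adj v (b i)
  rNbr : ∀ v ∈ R, ∃ i, G.Adj v (b i)
  lMin : ∀ j : Fin p, j < l → ¬ G.Adj (b j) (b ⟨p - 1, Nat.sub_lt pos Nat.one_pos⟩)
  lNbr : l.val = p - 1 ∨ G.Adj (b l) (b ⟨p - 1, Nat.sub_lt pos Nat.one_pos⟩)
  noEarlyR : ∀ j : Fin p, j < l → ∀ r ∈ R, ¬ G.Adj r (b j)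
  rMono : ∀ i j : Fin p, l ≤ i → i.val + 1 = j.val → ∀ r ∈ R,
    G.Adj (b i) r → G.Adj (b j) r

/-- `b : Fin p → V` enumerates (in umbrella order) a 2-branch of `G` with
complement partitioned into `L`, `R`, `C`; `b l` is the neighbor of `b (p-1)`
of minimal index and `b l'` is the neighbor of `b 0` of maximal index.  The
attachment cliques are `B₁ = {b i : i ≤ l'}` and `B₂ = {b i : l ≤ i}`, and
`B^R = {b i : l' < i < l}`. -/
structure TwoBranch (G : SimpleGraph V) {p : ℕ} (b : Fin p → V)
    (L R C : Set V) (l l' : Fin p) : Prop where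
  pos : 0 < p
  inj : Function.Injective b
  umbrella : ∀ i j m : Fin p, i < j → j < m → G.Adj (b i) (b m) →
    G.Adj (b i) (b j) ∧ G.Adj (b j) (b m)
  connB : (G.induce (Set.range b)).Connected
  cover : ∀ v : V, v ∉ Set.range b → v ∈ L ∪ R ∪ C
  disj : List.Pairwise Disjoint [Set.range b, L, R, C]
  noBC : ∀ v ∈ C, ∀ i, ¬ G.Adj v (b i)
  lNbrEx : ∀ v ∈ L, ∃ i, G.Adj v (b i)
  rNbrEx : ∀ v ∈ R, ∃ i, G.Adj v (b i)
  lMin : ∀ j : Fin p, j < l → ¬ G.Adj (b j) (b ⟨p - 1, Nat.sub_lt pos Nat.one_pos⟩)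
  lNbr : l.val = p - 1 ∨ G.Adj (b l) (b ⟨p - 1, Nat.sub_lt pos Nat.one_pos⟩)
  lMax' : ∀ j : Fin p, l' < j → ¬ G.Adj (b ⟨0, pos⟩) (b j)
  lNbr' : l'.val = 0 ∨ G.Adj (b ⟨0, pos⟩) (b l')
  noEarlyR : ∀ j : Fin p, j < l → ∀ r ∈ R, ¬ G.Adj r (b j)
  noLateL : ∀ j : Fin p, l' < j → ∀ v ∈ L, ¬ G.Adj v (b j)
  rMono : ∀ i j : Fin p, l ≤ i → i.val + 1 = j.val → ∀ r ∈ R,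
    G.Adj (b i) r → G.Adj (b j) r
  lMono : ∀ i j : Fin p, j ≤ l' → i.val + 1 = j.val → ∀ v ∈ L,
    G.Adj (b j) v → G.Adj (b i) v

/-- `e : Fin q → Fin p` lists the last indices of the `q` K-joins of the
K-join decomposition of the 2-branch enumerated by `b` (with attachment
cliques ending at `l'` resp. starting at `l`). -/
def KJoinDecomp (G : SimpleGraph V) {p : ℕ} (b : Fin p → V) (l l' : Fin p)
    (q : ℕ) (e : Fin q → Fin p) : Prop :=
  0 < q ∧
  (∀ i : Fin q, i.val = 0 → e i = l') ∧
  (∀ i : Fin q, i.val = q - 1 → (e i).val = p - 1) ∧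
  StrictMono e ∧
  ∀ i j : Fin q, i.val + 1 = j.val →
    ∃ hs : (e i).val + 1 < p,
      (j.val + 1 < q →
        (⟨(e i).val + 1, hs⟩ : Fin p) < l ∧
        G.Adj (b ⟨(e i).val + 1, hs⟩) (b (e j)) ∧
        ∀ m : Fin p, G.Adj (b ⟨(e i).val + 1, hs⟩) (b m) → m ≤ e j) ∧
      (j.val + 1 = q → l ≤ (⟨(e i).val + 1, hs⟩ : Fin p))

/-- `G` is a bi-clique chain graph: two cliques joined by a join. -/
def IsBicliqueChain (G : SimpleGraph V) : Prop :=
  ∃ (q : ℕ) (x : Fin q → V) (Y : Set V),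
    Function.Injective x ∧
    Disjoint (Set.range x) Y ∧
    (∀ v : V, v ∈ Set.range x ∨ v ∈ Y) ∧
    (∀ i j : Fin q, i ≠ j → G.Adj (x i) (x j)) ∧
    G.IsClique Y ∧
    (∀ i j : Fin q, i ≤ j → ∀ y ∈ Y, G.Adj (x i) y → G.Adj (x j) y)

/-- `F` is a bcc-`k`-completion of `G`. -/
def IsBccKCompletion (G : SimpleGraph V) (k : ℕ) (F : Finset (Sym2 V)) : Prop :=
  (∀ e ∈ F, ¬ e.IsDiag) ∧ (∀ e ∈ F, e ∉ G.edgeSet) ∧ F.card ≤ k ∧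
    IsBicliqueChain (addEdges G F)

section Helpers

open Fin.NatCast Fin.CommRing

lemma chainH {H : SimpleGraph V} {f : V → ℕ} (hf : IsUmbrellaOrdering H f)
    {a c x y : V} (h : H.Adj a c) (h1 : f a ≤ f x) (h2 : f x < f y) (h3 : f y ≤ f c) :
    H.Adj x y := by
  obtain ⟨finj, hu⟩ := hf
  have key : H.Adj x c := by
    rcases h1.eq_or_lt with h1 | h1
    · rwa [← finj h1]
    · exact (hu a x c h1 (lt_of_lt_of_le h2 h3) h).2
  rcases h3.eq_or_lt with h3 | h3
  · rwa [finj h3]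
  · exact (hu x y c h2 h3 key).1

lemma exists_cross {α : Type*} {G' : SimpleGraph α} (P : α → Prop) :
    ∀ {u v : α} (w : G'.Walk u v), P u → ¬ P v →
    ∃ x y, G'.Adj x y ∧ P x ∧ ¬ P y := by
  intro u v w
  induction w with
  | nil => intro h1 h2; exact absurd h1 h2
  | @cons a bb cc h w ih =>
    intro h1 h2
    by_cases hm : P bb
    · exact ih hm h2
    · exact ⟨_, _, h, h1, hm⟩

lemma prop_cycle {α : Type*} {t : ℕ} [NeZero t] (z : Fin t → α) (Q : α → Prop)
    (step : ∀ j : Fin t, Q (z j) → Q (z (j + 1))) (j0 : Fin t) (hQ : Q (z j0)) :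
    ∀ n : ℕ, Q (z (j0 + (n : Fin t))) := by
  intro n
  induction n with
  | zero => simpa using hQ
  | succ n ih =>
    have e1 : (j0 + ((n + 1 : ℕ) : Fin t) : Fin t) = (j0 + (n : Fin t)) + 1 := by
      push_cast; ring
    rw [e1]; exact step _ ih

lemma prop_cycle_all {α : Type*} {t : ℕ} [NeZero t] (z : Fin t → α) (Q : α → Prop)
    (step : ∀ j : Fin t, Q (z j) → Q (z (j + 1))) (j0 : Fin t) (hQ : Q (z j0))
    (j1 : Fin t) : Q (z j1) := by
  have := prop_cycle z Q step j0 hQ (j1 - j0).val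
  rwa [Fin.cast_val_eq_self, add_sub_cancel] at this

lemma prop_cycle_iff {α : Type*} {t : ℕ} [NeZero t] (z : Fin t → α) (Q : α → Prop)
    (bad : Fin t)
    (step : ∀ j : Fin t, j ≠ bad → j + 1 ≠ bad → (Q (z j) ↔ Q (z (j + 1)))) :
    ∀ n : ℕ, n + 1 < t → (Q (z (bad + 1 + (n : Fin t))) ↔ Q (z (bad + 1))) := by
  intro n
  induction n with
  | zero => simp
  | succ n ih =>
    intro h
    have h' : n + 1 < t := by omega
    have e1 : (bad + 1 + ((n + 1 : ℕ) : Fin t) : Fin t) = (bad + 1 + (n : Fin t)) + 1 := by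
      push_cast; ring
    have hdvd : ∀ m : ℕ, 0 < m → m < t → ((m : Fin t) : Fin t) ≠ 0 := by
      intro m hm1 hm2 hEq
      rw [Fin.natCast_eq_zero] at hEq
      exact absurd (Nat.le_of_dvd hm1 hEq) (by omega)
    have hne1 : bad + 1 + (n : Fin t) ≠ bad := by
      intro hEq
      have : ((n + 1 : ℕ) : Fin t) = 0 := by
        have := congrArg (· - bad) hEq
        push_cast
        rw [add_comm]
        calc (1 : Fin t) + (n : Fin t) = bad + 1 + (n : Fin t) - bad := by ring
        _ = 0 := by rw [hEq]; ring
      exact hdvd (n + 1) (by omega) (by omega) this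
    have hne2 : (bad + 1 + (n : Fin t)) + 1 ≠ bad := by
      intro hEq
      have : ((n + 2 : ℕ) : Fin t) = 0 := by
        push_cast
        calc (n : Fin t) + 2 = bad + 1 + (n : Fin t) + 1 - bad := by ring
        _ = 0 := by rw [hEq]; ring
      exact hdvd (n + 2) (by omega) (by omega) this
    rw [e1, ← step _ hne1 hne2]
    exact ih h'

end Helpers

section Counting

open Fin.NatCast

lemma counting_main (G : SimpleGraph V) (F chords : Finset (Sym2 V))
    [DecidableEq (Sym2 V)] (hPI : IsProperIntervalGraph (addEdges G F)) {t : ℕ}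
    [NeZero t] (ht : 3 ≤ t)
    (z : Fin t → V) (hinj : Function.Injective z)
    (hadj : ∀ i : Fin t, G.Adj (z i) (z (i + 1)))
    (hchord : ∀ i j : Fin t, G.Adj (z i) (z j) →
      s(z i, z j) ∈ (Finset.univ.image fun m : Fin t => s(z m, z (m + 1))) ∪ chords) :
    t - 3 ≤ F.card + chords.card := by
  classical
  obtain ⟨f, hf⟩ := hPI
  obtain ⟨finj, humb⟩ := id hf
  set H := addEdges G F with hH
  have hGH : ∀ {x y : V}, G.Adj x y → H.Adj x y := by
    intro x y h
    exact (le_sup_left : G ≤ addEdges G F) h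
  set s : Finset V := Finset.univ.image z with hs
  have hzmem : ∀ j : Fin t, z j ∈ s := fun j => Finset.mem_image_of_mem _ (Finset.mem_univ _)
  have hcard : s.card = t := by
    rw [hs, Finset.card_image_of_injective _ hinj, Finset.card_univ, Fintype.card_fin]
  let rel : V → V → Prop := fun a b => f a ≤ f b
  haveI : DecidableRel rel := fun a b => Nat.decLe _ _
  haveI : IsTrans V rel := ⟨fun _ _ _ hab hbc => le_trans hab hbc⟩
  haveI : IsAntisymm V rel := ⟨fun _ _ hab hba => finj (le_antisymm hab hba)⟩
  haveI : IsTotal V rel := ⟨fun _ _ => le_total _ _⟩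
  set Ls : List V := s.sort rel with hLs
  have hlen : Ls.length = t := by rw [hLs, Finset.length_sort, hcard]
  set u : ℕ → V := fun i => if h : i < t then Ls.get ⟨i, by rw [hlen]; exact h⟩ else z 0
    with hu
  have hu_get : ∀ (i : ℕ) (h : i < t), u i = Ls.get ⟨i, by rw [hlen]; exact h⟩ := by
    intro i h; rw [hu]; simp [h]
  have humem : ∀ i : ℕ, i < t → u i ∈ s := by
    intro i h
    rw [hu_get i h]
    exact (Finset.mem_sort rel).1 (List.get_mem _ _)
  have hsorted : Ls.Pairwise rel := Finset.pairwise_sort s rel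
  have hnodup : Ls.Nodup := Finset.sort_nodup s rel
  have hmono : ∀ i j : ℕ, i < j → j < t → f (u i) < f (u j) := by
    intro i j hij hj
    have hi : i < t := lt_trans hij hj
    have hle : rel (u i) (u j) := by
      rw [hu_get i hi, hu_get j hj]
      exact List.Pairwise.rel_get_of_lt hsorted (by simpa using hij)
    have hne : u i ≠ u j := by
      rw [hu_get i hi, hu_get j hj]
      intro hEq
      have h2 := (List.nodup_iff_injective_get).1 hnodup hEq
      rw [Fin.mk.injEq] at h2
      omega
    exact lt_of_le_of_ne hle fun hEq => hne (finj hEq)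
  have umono : ∀ i j : ℕ, i ≤ j → j < t → f (u i) ≤ f (u j) := by
    intro i j hij hj
    rcases eq_or_lt_of_le hij with h | h
    · rw [h]
    · exact le_of_lt (hmono i j h hj)
  have usurj : ∀ v ∈ s, ∃ i, i < t ∧ u i = v := by
    intro v hv
    have hv' : v ∈ Ls := (Finset.mem_sort rel).2 hv
    obtain ⟨⟨n, hn⟩, hget⟩ := List.mem_iff_get.1 hv'
    have hn' : n < t := by rwa [hlen] at hn
    exact ⟨n, hn', by rw [hu_get n hn']; exact hget⟩
  have uzex : ∀ i : ℕ, i < t → ∃ j : Fin t, z j = u i := by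
    intro i h
    have := humem i h
    rw [hs, Finset.mem_image] at this
    obtain ⟨j, _, hj⟩ := this
    exact ⟨j, hj⟩
  -- consecutive H-edges in sorted order
  have edgeA : ∀ i : ℕ, i + 1 < t → H.Adj (u i) (u (i + 1)) := by
    intro i hi1
    have hi : i < t := by omega
    obtain ⟨j0, hj0⟩ := uzex i hi
    set Q : V → Prop := fun v => f v ≤ f (u i) with hQ
    by_cases hstep : ∀ j : Fin t, Q (z j) → Q (z (j + 1))
    · exfalso
      obtain ⟨j1, hj1⟩ := uzex (i + 1) hi1
      have := prop_cycle_all z Q hstep j0 (by rw [hj0]) j1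
      rw [hj1] at this
      exact absurd this (not_le.2 (hmono i (i + 1) (by omega) hi1))
    · push_neg at hstep
      obtain ⟨j, hQj, hQj1⟩ := hstep
      obtain ⟨mj, hmjt, hmj⟩ := usurj (z (j + 1)) (hzmem _)
      have hge : f (u (i + 1)) ≤ f (z (j + 1)) := by
        rcases le_or_gt mj i with hc | hc
        · exact absurd (by rw [← hmj]; exact umono mj i hc hi) hQj1
        · rw [← hmj]; exact umono (i + 1) mj hc hmjt
      exact chainH hf (hGH (hadj j)) hQj (hmono i (i + 1) (by omega) hi1) hge
  -- skip-one H-edges in sorted order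
  have edgeB : ∀ i : ℕ, i + 2 < t → H.Adj (u i) (u (i + 2)) := by
    intro i hi2
    have hi : i < t := by omega
    have hi1 : i + 1 < t := by omega
    obtain ⟨jm, hjm⟩ := uzex (i + 1) hi1
    set Q : V → Prop := fun v => f v ≤ f (u i) with hQ
    have hclass : ∀ j : Fin t, j ≠ jm → Q (z j) ∨ f (u (i + 2)) ≤ f (z j) := by
      intro j hne
      obtain ⟨mj, hmjt, hmj⟩ := usurj (z j) (hzmem _)
      rcases le_or_gt mj i with hc | hc
      · left; rw [← hmj]; exact umono mj i hc hi
      rcases eq_or_lt_of_le (show i + 1 ≤ mj from hc) with hc2 | hc2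
      · exfalso; apply hne; apply hinj; rw [hjm, ← hmj, ← hc2]
      · right; rw [← hmj]; exact umono (i + 2) mj hc2 hmjt
    by_cases hstep : ∀ j : Fin t, j ≠ jm → j + 1 ≠ jm → (Q (z j) ↔ Q (z (j + 1)))
    · exfalso
      obtain ⟨ja, hja⟩ := uzex i hi
      obtain ⟨jb, hjb⟩ := uzex (i + 2) hi2
      have hcastt : ((t : ℕ) : Fin t) = 0 := by
        simp [Fin.natCast_self]
      have key : ∀ jx : Fin t, jx ≠ jm → (Q (z jx) ↔ Q (z (jm + 1))) := by
        intro jx hne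
        have hrep : jx = jm + 1 + ((jx - (jm + 1)).val : Fin t) := by
          rw [Fin.cast_val_eq_self, add_sub_cancel]
        have hval : (jx - (jm + 1)).val + 1 < t := by
          have h1 : (jx - (jm + 1)).val < t := (jx - (jm + 1)).isLt
          rcases eq_or_lt_of_le (show (jx - (jm + 1)).val + 1 ≤ t by omega) with h2 | h2
          · exfalso
            apply hne
            have : ((jx - (jm + 1)).val : Fin t) = ((t - 1 : ℕ) : Fin t) := by
              norm_num [show (jx - (jm+1)).val = t - 1 by omega]
            rw [this] at hrep
            have ht1 : ((t - 1 : ℕ) : Fin t) + 1 = 0 := by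
              have : (((t - 1) + 1 : ℕ) : Fin t) = 0 := by
                rw [show t - 1 + 1 = t by omega, hcastt]
              push_cast at this
              exact this
            rw [hrep, add_assoc, add_comm 1, ht1, add_zero]
          · exact h2
        rw [hrep]
        exact prop_cycle_iff z Q jm hstep _ hval
      have hQa : Q (z ja) := by rw [hja]
      have hja_ne : ja ≠ jm := by
        intro hEq
        rw [hEq, hjm] at hja
        exact absurd (congrArg f hja) (ne_of_gt (hmono i (i + 1) (by omega) hi1))
      have hjb_ne : jb ≠ jm := by
        intro hEq
        rw [hEq, hjm] at hjb
        exact absurd (congrArg f hjb) (ne_of_lt (hmono (i + 1) (i + 2) (by omega) hi2))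
      have hQb : Q (z jb) := ((key jb hjb_ne)).2 (((key ja hja_ne)).1 hQa)
      rw [hjb] at hQb
      exact absurd hQb (not_le.2 (hmono i (i + 2) (by omega) hi2))
    · push_neg at hstep
      obtain ⟨j, hne1, hne2, hniff⟩ := hstep
      rcases hniff with ⟨hA, hB⟩ | ⟨hA, hB⟩
      · have hhigh : f (u (i + 2)) ≤ f (z (j + 1)) := by
          rcases hclass (j + 1) hne2 with h | h
          · exact absurd h hB
          · exact h
        have hA' : f (z j) ≤ f (u i) := hA
        exact chainH hf (hGH (hadj j)) hA' (hmono i (i + 2) (by omega) hi2) hhigh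
      · have hhigh : f (u (i + 2)) ≤ f (z j) := by
          rcases hclass j hne1 with h | h
          · exact absurd h hA
          · exact h
        have hB' : f (z (j + 1)) ≤ f (u i) := hB
        exact chainH hf (hGH (hadj j).symm) hB' (hmono i (i + 2) (by omega) hi2) hhigh
  -- injectivity of sorted pairs
  have uinj : ∀ {i j : ℕ}, i < t → j < t → u i = u j → i = j := by
    intro i j hi hj hEq
    by_contra hne
    rcases Nat.lt_or_ge i j with h | h
    · exact absurd (congrArg f hEq) (ne_of_lt (hmono i j h hj))
    · have h' : j < i := by omega
      exact absurd (congrArg f hEq) (ne_of_gt (hmono j i h' hi))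
  have pairEq : ∀ {a bb c d : ℕ}, a < bb → c < d → bb < t → d < t →
      s(u a, u bb) = s(u c, u d) → a = c ∧ bb = d := by
    intro a bb c d h1 h2 h3 h4 hEq
    rw [Sym2.eq_iff] at hEq
    rcases hEq with ⟨e1, e2⟩ | ⟨e1, e2⟩
    · exact ⟨uinj (by omega) (by omega) e1, uinj h3 h4 e2⟩
    · have q1 := uinj (by omega) h4 e1
      have q2 := uinj h3 (by omega) e2
      omega
  set T1 : Finset (Sym2 V) := (Finset.range (t - 1)).image fun i => s(u i, u (i + 1))
    with hT1
  set T2 : Finset (Sym2 V) := (Finset.range (t - 2)).image fun i => s(u i, u (i + 2))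
    with hT2
  have hT1card : T1.card = t - 1 := by
    rw [hT1, Finset.card_image_of_injOn, Finset.card_range]
    intro a ha bb hb hEq
    simp only [Finset.coe_range, Set.mem_Iio] at ha hb
    exact (pairEq (by omega) (by omega) (by omega) (by omega) hEq).1
  have hT2card : T2.card = t - 2 := by
    rw [hT2, Finset.card_image_of_injOn, Finset.card_range]
    intro a ha bb hb hEq
    simp only [Finset.coe_range, Set.mem_Iio] at ha hb
    exact (pairEq (by omega) (by omega) (by omega) (by omega) hEq).1
  have hdisj : Disjoint T1 T2 := by
    rw [Finset.disjoint_left]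
    intro x hx1 hx2
    rw [hT1, Finset.mem_image] at hx1
    rw [hT2, Finset.mem_image] at hx2
    obtain ⟨a, ha, hEq1⟩ := hx1
    obtain ⟨c, hc, hEq2⟩ := hx2
    rw [Finset.mem_range] at ha hc
    have := pairEq (by omega) (by omega) (by omega) (by omega) (hEq1.trans hEq2.symm)
    omega
  set cycE : Finset (Sym2 V) := Finset.univ.image fun m : Fin t => s(z m, z (m + 1))
    with hcycE
  have hsub : ∀ x ∈ T1 ∪ T2, x ∈ cycE ∪ chords ∪ F := by
    intro x hx
    obtain ⟨a, bb, ha, hb, hEq, hAdj⟩ : ∃ a bb : ℕ, a < t ∧ bb < t ∧ x = s(u a, u bb) ∧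
        H.Adj (u a) (u bb) := by
      rcases Finset.mem_union.1 hx with hx | hx
      · rw [hT1, Finset.mem_image] at hx
        obtain ⟨a, ha, hEq⟩ := hx
        rw [Finset.mem_range] at ha
        exact ⟨a, a + 1, by omega, by omega, hEq.symm, edgeA a (by omega)⟩
      · rw [hT2, Finset.mem_image] at hx
        obtain ⟨a, ha, hEq⟩ := hx
        rw [Finset.mem_range] at ha
        exact ⟨a, a + 2, by omega, by omega, hEq.symm, edgeB a (by omega)⟩
    have hAdj' : G.Adj (u a) (u bb) ∨ s(u a, u bb) ∈ F := by
      rw [hH] at hAdj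
      rcases (SimpleGraph.sup_adj _ _ _ _).1 hAdj with h | h
      · exact Or.inl h
      · rw [SimpleGraph.fromEdgeSet_adj] at h
        exact Or.inr (by exact_mod_cast h.1)
    rcases hAdj' with hg | hfa
    · obtain ⟨ja, hja⟩ := uzex a ha
      obtain ⟨jb, hjb⟩ := uzex bb hb
      have := hchord ja jb (by rw [hja, hjb]; exact hg)
      rw [hja, hjb] at this
      rw [hEq]
      rcases Finset.mem_union.1 this with h | h
      · exact Finset.mem_union.2 (Or.inl (Finset.mem_union.2 (Or.inl h)))
      · exact Finset.mem_union.2 (Or.inl (Finset.mem_union.2 (Or.inr h)))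
    · rw [hEq]
      exact Finset.mem_union.2 (Or.inr hfa)
  have hc1 : (T1 ∪ T2).card ≤ (cycE ∪ chords ∪ F).card :=
    Finset.card_le_card hsub
  have hc2 : (cycE ∪ chords ∪ F).card ≤ cycE.card + chords.card + F.card :=
    le_trans (Finset.card_union_le _ _) (add_le_add_left (Finset.card_union_le _ _) _)
  have hc3 : cycE.card ≤ t := by
    rw [hcycE]
    exact le_trans Finset.card_image_le (by simp)
  have hc4 : (T1 ∪ T2).card = (t - 1) + (t - 2) := by
    rw [Finset.card_union_of_disjoint hdisj, hT1card, hT2card]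
  omega

end Counting

lemma chainB {p : ℕ} {G : SimpleGraph V} {b : Fin p → V}
    (humb : ∀ i j m : Fin p, i < j → j < m → G.Adj (b i) (b m) →
      G.Adj (b i) (b j) ∧ G.Adj (b j) (b m))
    {a c x y : Fin p} (h : G.Adj (b a) (b c)) (h1 : a ≤ x) (h2 : x < y) (h3 : y ≤ c) :
    G.Adj (b x) (b y) := by
  have key : G.Adj (b x) (b c) := by
    rcases eq_or_lt_of_le h1 with h1 | h1
    · rwa [← h1]
    · exact (humb a x c h1 (lt_of_lt_of_le h2 h3) h).2
  rcases eq_or_lt_of_le h3 with h3 | h3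
  · rwa [h3]
  · exact (humb x y c h2 h3 key).1


/-- If a 2-branch has at least `k + 4` K-joins in its K-join decomposition
and its two attachment cliques lie in the same connected component of
`G[V ∖ B^R]`, then `G` has no `k`-completion. -/
theorem two_branch_no_completion [Fintype V] (G : SimpleGraph V) (k p : ℕ)
    (b : Fin p → V) (L R C : Set V) (l l' : Fin p)
    (hB : TwoBranch G b L R C l l')
    (q : ℕ) (e : Fin q → Fin p)
    (hdec : KJoinDecomp G b l l' q e) (hq : k + 4 ≤ q)
    (hsame : ∃ (x y : V)
      (hx : x ∈ {v : V | v ∉ b '' {i : Fin p | l' < i ∧ i < l}})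
      (hy : y ∈ {v : V | v ∉ b '' {i : Fin p | l' < i ∧ i < l}}),
      x ∈ b '' {i : Fin p | i ≤ l'} ∧ y ∈ b '' {i : Fin p | l ≤ i} ∧
      (G.induce {v : V | v ∉ b '' {i : Fin p | l' < i ∧ i < l}}).Reachable
        ⟨x, hx⟩ ⟨y, hy⟩) :
    ¬ ∃ F : Finset (Sym2 V), IsKCompletion G k F := by
  classical
  rintro ⟨F, ⟨⟨hdiag, hnonedge, hPI⟩, hFcard⟩⟩
  obtain ⟨hq0, hfirst, hlast, hemono, hpair⟩ := hdec
  have hq4 : 4 ≤ q := by omega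
  have binj : Function.Injective b := hB.inj
  have humb := hB.umbrella
  have hp0 : 0 < p := hB.pos
  -- eN machinery
  set eN : ℕ → ℕ := fun i => if h : i < q then (e ⟨i, h⟩).val else 0 with heNdef
  have heN : ∀ (i : ℕ) (h : i < q), eN i = (e ⟨i, h⟩).val := fun i h => dif_pos h
  have heN0 : eN 0 = l'.val := by
    rw [heN 0 (by omega), hfirst ⟨0, by omega⟩ rfl]
  have heNmono : ∀ i j : ℕ, i ≤ j → j < q → eN i ≤ eN j := by
    intro i j hij hj
    rw [heN i (by omega), heN j hj]
    exact hemono.monotone (show (⟨i, by omega⟩ : Fin q) ≤ ⟨j, hj⟩ from hij)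
  have heNstrict : ∀ i : ℕ, i + 1 < q → eN i < eN (i + 1) := by
    intro i hi
    rw [heN i (by omega), heN (i+1) hi]
    exact hemono (show (⟨i, by omega⟩ : Fin q) < ⟨i+1, hi⟩ from by simp)
  have heNlt_l : ∀ i : ℕ, i < q - 2 → eN i + 1 < l.val := by
    intro i hi
    obtain ⟨hs, hA, -⟩ := hpair ⟨i, by omega⟩ ⟨i + 1, by omega⟩ rfl
    have := (hA (by simp; omega)).1
    rw [Fin.lt_def] at this
    rw [heN i (by omega)]
    exact this
  have hl'l : l' < l := by
    have := heNlt_l 0 (by omega)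
    rw [heN0] at this
    rw [Fin.lt_def]; omega
  -- the gap lemma
  have hgap : ∀ (i : ℕ), i + 2 < q → ∀ a cc : Fin p,
      a.val ≤ eN i + 1 → G.Adj (b a) (b cc) → cc.val ≤ eN (i + 1) := by
    intro i hi a cc hale hadj2
    obtain ⟨hs, hA, -⟩ := hpair ⟨i, by omega⟩ ⟨i + 1, by omega⟩ rfl
    obtain ⟨-, -, hmax⟩ := hA (by simp; omega)
    have hyi : (⟨(e ⟨i, by omega⟩).val + 1, hs⟩ : Fin p).val = eN i + 1 := by
      simp [heN i (by omega)]
    have hmax' : ∀ m : Fin p, G.Adj (b ⟨(e ⟨i, by omega⟩).val + 1, hs⟩) (b m) →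
        m.val ≤ eN (i + 1) := by
      intro m hm
      have h2 := hmax m hm
      rw [Fin.le_def] at h2
      rw [heN (i + 1) (by omega)]
      exact h2
    rcases eq_or_lt_of_le hale with hEq | hlt2
    · have ha' : a = ⟨(e ⟨i, by omega⟩).val + 1, hs⟩ := Fin.ext (by rw [hyi, hEq])
      exact hmax' cc (by rwa [← ha'])
    · by_cases hcc : cc.val ≤ eN i + 1
      · have h1 := heNstrict i (by omega)
        omega
      · push_neg at hcc
        refine hmax' cc (chainB humb hadj2 ?_ ?_ (le_refl cc))
        · rw [Fin.le_def, hyi]; omega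
        · rw [Fin.lt_def, hyi]; omega
  -- ψ potential
  have hψex : ∀ a : ℕ, ∃ i, q - 2 ≤ i ∨ a ≤ eN i + 1 := fun a => ⟨q - 2, Or.inl le_rfl⟩
  set ψ : ℕ → ℕ := fun a => Nat.find (hψex a) with hψdef
  have ψle : ∀ a, ψ a ≤ q - 2 := fun a => Nat.find_le (Or.inl le_rfl)
  have ψspec : ∀ a, q - 2 ≤ ψ a ∨ a ≤ eN (ψ a) + 1 := fun a => Nat.find_spec (hψex a)
  have ψ0 : ∀ a : ℕ, a ≤ l'.val + 1 → ψ a = 0 := by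
    intro a ha
    rw [hψdef]
    rw [Nat.find_eq_zero]
    exact Or.inr (by rw [heN0]; omega)
  have ψfull : ∀ a : ℕ, l.val ≤ a → ψ a = q - 2 := by
    intro a ha
    refine le_antisymm (ψle a) ?_
    by_contra hlt
    push_neg at hlt
    rcases ψspec a with h | h
    · omega
    · have := heNlt_l (ψ a) (by omega)
      omega
  have ψstep : ∀ a cc : Fin p, G.Adj (b a) (b cc) → ψ cc.val ≤ ψ a.val + 1 := by
    intro a cc hadj2
    refine Nat.find_le ?_
    by_cases h : q - 2 ≤ ψ a.val + 1
    · exact Or.inl h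
    · push_neg at h
      refine Or.inr ?_
      have hspec : a.val ≤ eN (ψ a.val) + 1 := by
        rcases ψspec a.val with h' | h'
        · omega
        · exact h'
      have := hgap (ψ a.val) (by omega) a cc hspec hadj2
      omega
  have noB1B2 : ∀ a cc : Fin p, a ≤ l' → l ≤ cc → ¬ G.Adj (b a) (b cc) := by
    intro a cc h1 h2 hadj2
    have hs1 : ψ a.val = 0 := ψ0 a.val (by rw [Fin.le_def] at h1; omega)
    have hs2 : ψ cc.val = q - 2 := ψfull cc.val (by rw [Fin.le_def] at h2; omega)
    have := ψstep a cc hadj2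
    omega
  -- consecutive adjacency along the branch
  have consec : ∀ a : ℕ, ∀ h : a + 1 < p, G.Adj (b ⟨a, by omega⟩) (b ⟨a + 1, h⟩) := by
    intro a ha
    obtain ⟨W⟩ := hB.connB.preconnected ⟨b ⟨a, by omega⟩, ⟨⟨a, by omega⟩, rfl⟩⟩
      ⟨b ⟨a + 1, ha⟩, ⟨⟨a + 1, ha⟩, rfl⟩⟩
    obtain ⟨xx, yy, hxy, ⟨i1, hi1, hi1le⟩, hnyy⟩ :=
      exists_cross (fun v : ↑(Set.range b) => ∃ i : Fin p, b i = v.val ∧ i.val ≤ a) W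
        ⟨⟨a, by omega⟩, rfl, le_refl a⟩
        (by
          rintro ⟨i, hi, hile⟩
          have h2 : i = ⟨a + 1, ha⟩ := binj hi
          have h3 : a + 1 ≤ a := by rw [h2] at hile; exact hile
          omega)
    obtain ⟨i2, hi2⟩ := yy.2
    have hi2gt : a < i2.val := by
      by_contra hle
      exact hnyy ⟨i2, hi2, by omega⟩
    have hadj12 : G.Adj (b i1) (b i2) := by
      have h' : G.Adj xx.val yy.val := hxy
      rwa [← hi1, ← hi2] at h'
    exact chainB humb hadj12 (show i1 ≤ ⟨a, by omega⟩ from hi1le)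
      (show (⟨a, by omega⟩ : Fin p) < ⟨a + 1, ha⟩ from by simp [Fin.lt_def])
      (show (⟨a + 1, ha⟩ : Fin p) ≤ i2 from hi2gt)
  -- cliques
  have cliqueB1 : ∀ x y : Fin p, x < y → y ≤ l' → G.Adj (b x) (b y) := by
    intro x y hxy hyl
    rcases hB.lNbr' with h0 | h0
    · exfalso
      have : y.val ≤ l'.val := hyl
      rw [h0] at this
      have : x.val < y.val := hxy
      omega
    · exact chainB humb h0 (show (⟨0, hp0⟩ : Fin p) ≤ x from by simp [Fin.le_def]) hxy hyl
  have cliqueB2 : ∀ x y : Fin p, l ≤ x → x < y → G.Adj (b x) (b y) := by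
    intro x y hlx hxy
    rcases hB.lNbr with h0 | h0
    · exfalso
      have h1 : l.val ≤ x.val := hlx
      have h2 : x.val < y.val := hxy
      have h3 : y.val < p := y.isLt
      omega
    · exact chainB humb h0 hlx hxy
        (show y ≤ ⟨p - 1, Nat.sub_lt hB.pos Nat.one_pos⟩ from by
          simp [Fin.le_def]; omega)
    -- disjointness facts
  have hd := hB.disj
  rw [List.pairwise_cons] at hd
  have hbL : Disjoint (Set.range b) L := hd.1 L (by simp)
  have hbR : Disjoint (Set.range b) R := hd.1 R (by simp)
  have hbC : Disjoint (Set.range b) C := hd.1 C (by simp)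
  have hnotb : ∀ v, v ∈ L ∪ R ∪ C → v ∉ Set.range b := by
    intro v hv hvb
    rcases hv with (h | h) | h
    · exact Set.disjoint_left.1 hbL hvb h
    · exact Set.disjoint_left.1 hbR hvb h
    · exact Set.disjoint_left.1 hbC hvb h
  have hLRC : ∀ v, v ∈ L ∪ R ∪ C → ∀ i : Fin p, l' < i → i < l → ¬ G.Adj v (b i) := by
    intro v hv i h1 h2
    rcases hv with (h | h) | h
    · exact hB.noLateL i h1 v h
    · exact hB.noEarlyR i h2 v h
    · exact hB.noBC v h i
  -- the three vertex classes
  set Dset : Set V := b '' {i : Fin p | l' < i ∧ i < l} with hDdef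
  set S1 : Set V := b '' {i : Fin p | i ≤ l'} with hS1def
  set S2 : Set V := b '' {i : Fin p | l ≤ i} with hS2def
  have hS1D : ∀ v, v ∈ S1 → v ∉ Dset := by
    rintro v ⟨u, hu, huv⟩ ⟨u2, hu2, hu2v⟩
    have : u = u2 := binj (by rw [huv, hu2v])
    rw [this] at hu
    exact absurd hu (not_le.2 hu2.1)
  have hS2D : ∀ v, v ∈ S2 → v ∉ Dset := by
    rintro v ⟨u, hu, huv⟩ ⟨u2, hu2, hu2v⟩
    have : u = u2 := binj (by rw [huv, hu2v])
    rw [this] at hu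
    exact absurd hu (not_le.2 hu2.2)
  -- the external path: existence
  have hex : ∃ n, ∃ c : ℕ → V, c 0 ∈ S1 ∧ c n ∈ S2 ∧
      (∀ j, j < n → G.Adj (c j) (c (j + 1))) ∧ (∀ j, j ≤ n → c j ∉ Dset) := by
    obtain ⟨x, y, hx, hy, hxS1, hyS2, hreach⟩ := hsame
    obtain ⟨W⟩ := hreach
    refine ⟨W.length, fun j => (W.getVert j).val, ?_, ?_, ?_, ?_⟩
    · dsimp only
      rw [SimpleGraph.Walk.getVert_zero]
      exact hxS1
    · dsimp only
      rw [SimpleGraph.Walk.getVert_length]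
      exact hyS2
    · intro j hj
      exact W.adj_getVert_succ hj
    · intro j _
      exact (W.getVert j).2
  set r := Nat.find hex with hrdef
  obtain ⟨pc, hpc0, hpcr, hpcadj, hpcD⟩ : ∃ c : ℕ → V, c 0 ∈ S1 ∧ c r ∈ S2 ∧
      (∀ j, j < r → G.Adj (c j) (c (j + 1))) ∧ (∀ j, j ≤ r → c j ∉ Dset) :=
    Nat.find_spec hex
  have hrle : ∀ n, (∃ c : ℕ → V, c 0 ∈ S1 ∧ c n ∈ S2 ∧
      (∀ j, j < n → G.Adj (c j) (c (j + 1))) ∧ (∀ j, j ≤ n → c j ∉ Dset)) → r ≤ n :=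
    fun n h => Nat.find_le h
  -- path facts
  have Pinj : ∀ j jj, j < jj → jj ≤ r → pc j ≠ pc jj := by
    intro j jj hjlt hjjr hEq
    have hcl : r ≤ r - (jj - j) := by
      refine hrle _ ⟨fun i => if i < j then pc i else pc (i + (jj - j)), ?_, ?_, ?_, ?_⟩ <;> dsimp only
      · by_cases h0 : 0 < j
        · simpa [h0] using hpc0
        · have hj0 : j = 0 := by omega
          subst hj0
          rw [if_neg (lt_irrefl 0), show 0 + (jj - 0) = jj by omega, ← hEq]
          exact hpc0
      · have hge : ¬ (r - (jj - j) < j) := by omega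
        simp only [if_neg hge, show r - (jj - j) + (jj - j) = r by omega]
        exact hpcr
      · intro i hi
        by_cases h1 : i < j
        · by_cases h2 : i + 1 < j
          · simp only [if_pos h1, if_pos h2]
            exact hpcadj i (by omega)
          · rw [if_pos h1, if_neg h2, show i + 1 + (jj - j) = jj by omega, ← hEq,
              show j = i + 1 by omega]
            exact hpcadj i (by omega)
        · have h2 : ¬ (i + 1 < j) := by omega
          simp only [if_neg h1, if_neg h2,
            show i + 1 + (jj - j) = (i + (jj - j)) + 1 by omega]
          exact hpcadj _ (by omega)
      · intro i _
        by_cases h1 : i < j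
        · simp only [if_pos h1]
          exact hpcD i (by omega)
        · simp only [if_neg h1]
          exact hpcD _ (by omega)
    omega
  have Pchord : ∀ j jj, j + 2 ≤ jj → jj ≤ r → ¬ G.Adj (pc j) (pc jj) := by
    intro j jj hjlt hjjr hAdj
    have hcl : r ≤ r - (jj - j - 1) := by
      refine hrle _ ⟨fun i => if i ≤ j then pc i else pc (i + (jj - j - 1)), ?_, ?_, ?_, ?_⟩ <;> dsimp only
      · simp only [if_pos (by omega : (0:ℕ) ≤ j)]
        exact hpc0
      · have hge : ¬ (r - (jj - j - 1) ≤ j) := by omega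
        simp only [if_neg hge, show r - (jj - j - 1) + (jj - j - 1) = r by omega]
        exact hpcr
      · intro i hi
        by_cases h1 : i ≤ j
        · by_cases h2 : i + 1 ≤ j
          · simp only [if_pos h1, if_pos h2]
            exact hpcadj i (by omega)
          · rw [if_pos h1, if_neg h2, show i + 1 + (jj - j - 1) = jj by omega,
              show i = j by omega]
            exact hAdj
        · have h2 : ¬ (i + 1 ≤ j) := by omega
          simp only [if_neg h1, if_neg h2,
            show i + 1 + (jj - j - 1) = (i + (jj - j - 1)) + 1 by omega]
          exact hpcadj _ (by omega)
      · intro i _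
        by_cases h1 : i ≤ j
        · simp only [if_pos h1]
          exact hpcD i (by omega)
        · simp only [if_neg h1]
          exact hpcD _ (by omega)
    omega
  have PS1 : ∀ j, 1 ≤ j → j ≤ r → pc j ∉ S1 := by
    intro j h1 h2 hmem
    have hcl : r ≤ r - j := by
      refine hrle _ ⟨fun i => pc (i + j), ?_, ?_, ?_, ?_⟩ <;> dsimp only
      · rw [zero_add]; exact hmem
      · rw [show r - j + j = r by omega]; exact hpcr
      · intro i hi
        rw [show i + 1 + j = (i + j) + 1 by omega]
        exact hpcadj _ (by omega)
      · intro i _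
        exact hpcD _ (by omega)
    omega
  have PS2 : ∀ j, j < r → pc j ∉ S2 := by
    intro j h2 hmem
    have hcl : r ≤ j :=
      hrle _ ⟨pc, hpc0, hmem, fun i hi => hpcadj i (by omega), fun i hi => hpcD i (by omega)⟩
    omega
  have PadjS1 : ∀ j, 2 ≤ j → j ≤ r → ∀ v, v ∈ S1 → ¬ G.Adj (pc j) v := by
    intro j h1 h2 v hv hAdj
    have hcl : r ≤ r - j + 1 := by
      refine hrle _ ⟨fun i => if i = 0 then v else pc (i - 1 + j), ?_, ?_, ?_, ?_⟩ <;> dsimp only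
      · simp only [if_pos rfl]; exact hv
      · have h0 : ¬ (r - j + 1 = 0) := by omega
        simp only [if_neg h0, show r - j + 1 - 1 + j = r by omega]
        exact hpcr
      · intro i hi
        by_cases h0 : i = 0
        · simp only [h0, if_pos rfl, if_neg (by omega : ¬ (0:ℕ) + 1 = 0),
            show (0:ℕ) + 1 - 1 + j = j by omega]
          exact hAdj.symm
        · simp only [if_neg h0, if_neg (by omega : ¬ i + 1 = 0),
            show i + 1 - 1 + j = (i - 1 + j) + 1 by omega]
          exact hpcadj _ (by omega)
      · intro i _
        by_cases h0 : i = 0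
        · simp only [h0, if_pos rfl]
          exact hS1D v hv
        · simp only [if_neg h0]
          exact hpcD _ (by omega)
    omega
  have PadjS2 : ∀ j, j + 2 ≤ r → ∀ v, v ∈ S2 → ¬ G.Adj (pc j) v := by
    intro j h2 v hv hAdj
    have hcl : r ≤ j + 1 := by
      refine hrle _ ⟨fun i => if i ≤ j then pc i else v, ?_, ?_, ?_, ?_⟩ <;> dsimp only
      · simp only [if_pos (by omega : (0:ℕ) ≤ j)]
        exact hpc0
      · simp only [if_neg (by omega : ¬ j + 1 ≤ j)]
        exact hv
      · intro i hi
        by_cases h1 : i + 1 ≤ j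
        · simp only [if_pos (by omega : i ≤ j), if_pos h1]
          exact hpcadj i (by omega)
        · rw [if_pos (by omega : i ≤ j), if_neg h1, show i = j by omega]
          exact hAdj
      · intro i _
        by_cases h1 : i ≤ j
        · simp only [if_pos h1]
          exact hpcD i (by omega)
        · simp only [if_neg h1]
          exact hS2D v hv
    omega
  have Pint : ∀ j, 1 ≤ j → j < r → pc j ∈ L ∪ R ∪ C := by
    intro j h1 h2
    refine hB.cover (pc j) ?_
    rintro ⟨u, hu⟩
    rcases le_or_gt u l' with h | h
    · exact PS1 j h1 (by omega) ⟨u, h, hu⟩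
    rcases le_or_gt l u with h' | h'
    · exact PS2 j h2 ⟨u, h', hu⟩
    · exact hpcD j (by omega) ⟨u, ⟨h, h'⟩, hu⟩
  have hr3 : 3 ≤ r := by
    obtain ⟨u1, hu1, hequ1⟩ := id hpc0
    obtain ⟨u2, hu2, hequ2⟩ := id hpcr
    have hu1u2 : u1 < u2 := lt_of_le_of_lt hu1 (lt_of_lt_of_le hl'l hu2)
    by_contra hlt
    push_neg at hlt
    have h3 : r = 0 ∨ r = 1 ∨ r = 2 := by omega
    rcases h3 with h3 | h3 | h3
    · rw [h3] at hequ2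
      rw [← hequ1] at hequ2
      exact absurd (binj hequ2) (ne_of_gt hu1u2)
    · have := hpcadj 0 (by omega)
      rw [← hequ1, show (0:ℕ)+1 = r by omega, ← hequ2] at this
      exact noB1B2 u1 u2 hu1 hu2 this
    · have hint := Pint 1 (by omega) (by omega)
      rcases hint with (hL | hR) | hC
      · refine hB.noLateL u2 (lt_of_lt_of_le hl'l hu2) _ hL ?_
        have := hpcadj 1 (by omega)
        rwa [show (1:ℕ)+1 = r by omega, ← hequ2] at this
      · refine hB.noEarlyR u1 (lt_of_le_of_lt hu1 hl'l) _ hR ?_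
        have := (hpcadj 0 (by omega)).symm
        rwa [← hequ1] at this
      · exact hB.noBC _ hC u2 (by
          have := hpcadj 1 (by omega)
          rwa [show (1:ℕ)+1 = r by omega, ← hequ2] at this)
    -- endpoints of the external path as branch indices
  obtain ⟨mfin, hmle, hmeq⟩ := id hpc0
  obtain ⟨m2fin, hm2le, hm2eq⟩ := id hpcr
  have hmle' : mfin ≤ l' := hmle
  have hm2le' : l ≤ m2fin := hm2le
  -- maximal-neighbour function
  set nbrs : Fin p → Finset (Fin p) := fun a => Finset.univ.filter (fun c => G.Adj (b a) (b c))
    with hnbrs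
  set M : Fin p → Fin p := fun a => if h : (nbrs a).Nonempty then (nbrs a).max' h else a
    with hM
  have Mmax : ∀ a c : Fin p, G.Adj (b a) (b c) → c ≤ M a := by
    intro a c h
    have hmem : c ∈ nbrs a := by
      rw [hnbrs]; exact Finset.mem_filter.2 ⟨Finset.mem_univ _, h⟩
    have hne : (nbrs a).Nonempty := ⟨c, hmem⟩
    rw [hM]
    dsimp only
    rw [dif_pos hne]
    exact Finset.le_max' _ _ hmem
  have hlt_of_lt_l : ∀ a : Fin p, a < l → a.val + 1 < p := by
    intro a ha
    have h1 : a.val < l.val := ha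
    have := l.isLt
    omega
  have Madj : ∀ a : Fin p, a.val + 1 < p → G.Adj (b a) (b (M a)) ∧ a < M a := by
    intro a ha
    have hc0 := consec a.val ha
    rw [show (⟨a.val, by omega⟩ : Fin p) = a from Fin.ext rfl] at hc0
    have hmem : (⟨a.val + 1, ha⟩ : Fin p) ∈ nbrs a := by
      rw [hnbrs]; exact Finset.mem_filter.2 ⟨Finset.mem_univ _, hc0⟩
    have hne : (nbrs a).Nonempty := ⟨_, hmem⟩
    constructor
    · have hMv : M a = (nbrs a).max' hne := by
        rw [hM]; dsimp only; rw [dif_pos hne]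
      rw [hMv]
      have hmm : (nbrs a).max' hne ∈ Finset.univ.filter (fun c => G.Adj (b a) (b c)) :=
        Finset.max'_mem (nbrs a) hne
      exact (Finset.mem_filter.1 hmm).2
    · have h1 : (⟨a.val + 1, ha⟩ : Fin p) ≤ M a := Mmax a _ hc0
      have h2 : a < (⟨a.val + 1, ha⟩ : Fin p) := by rw [Fin.lt_def]; simp
      exact lt_of_lt_of_le h2 h1
  -- the greedy increasing walk
  set g : ℕ → Fin p := fun n => Nat.rec mfin (fun _ prev => if prev < l then M prev else prev) n
    with hg
  have hg0 : g 0 = mfin := rfl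
  have hgstep : ∀ n, g n < l → g (n + 1) = M (g n) := by
    intro n hn
    have h0 : g (n + 1) = if g n < l then M (g n) else g n := rfl
    rw [h0, if_pos hn]
  have hgfreeze : ∀ n, ¬ (g n < l) → g (n + 1) = g n := by
    intro n hn
    have h0 : g (n + 1) = if g n < l then M (g n) else g n := rfl
    rw [h0, if_neg hn]
  have hginc : ∀ n, g n < l → g n < g (n + 1) := by
    intro n hn
    rw [hgstep n hn]
    exact (Madj (g n) (hlt_of_lt_l _ hn)).2
  have hgadj : ∀ n, g n < l → G.Adj (b (g n)) (b (g (n + 1))) := by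
    intro n hn
    rw [hgstep n hn]
    exact (Madj (g n) (hlt_of_lt_l _ hn)).1
  have hgmono : ∀ n n' : ℕ, n ≤ n' → g n ≤ g n' := by
    intro n n' h
    induction n' with
    | zero => rw [Nat.le_zero.1 h]
    | succ m ih =>
      rcases Nat.lt_or_ge n (m + 1) with h' | h'
      · have h2 := ih (by omega)
        by_cases hc : g m < l
        · exact le_trans h2 (le_of_lt (hginc m hc))
        · rw [hgfreeze m hc]; exact h2
      · rw [show n = m + 1 by omega]
  have hJex : ∃ n, l ≤ g n := by
    by_contra hno
    push_neg at hno
    have hgrow : ∀ n, mfin.val + n ≤ (g n).val := by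
      intro n
      induction n with
      | zero => simp [hg0]
      | succ m ih =>
        have h2 : (g m).val < (g (m + 1)).val := hginc m (hno m)
        omega
    have h3 := hgrow p
    have h4 := (g p).isLt
    omega
  set J := Nat.find hJex with hJdef
  have hJspec : l ≤ g J := Nat.find_spec hJex
  have hJmin : ∀ n, n < J → g n < l := fun n hn => not_le.1 (Nat.find_min hJex hn)
  have hJ1 : 1 ≤ J := by
    rcases Nat.eq_zero_or_pos J with h | h
    · exfalso
      rw [h, hg0] at hJspec
      have : l < l := lt_of_le_of_lt (le_trans hJspec hmle') hl'l
      exact lt_irrefl l this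
    · exact h
  -- the inner path through the branch
  set sQ : ℕ := if m2fin ≤ g J then J else J + 1 with hsQdef
  set idxQ : ℕ → Fin p := fun i => if i < sQ then g i else m2fin with hidxQdef
  have hsQJ : J ≤ sQ ∧ sQ ≤ J + 1 := by
    rw [hsQdef]; split_ifs <;> omega
  have hidx_lt : ∀ i, i < sQ → idxQ i = g i := by
    intro i h
    rw [hidxQdef]; dsimp only; rw [if_pos h]
  have hidx_ge : ∀ i, sQ ≤ i → idxQ i = m2fin := by
    intro i h
    rw [hidxQdef]; dsimp only; rw [if_neg (by omega)]
  have hgl2 : ∀ i, i + 1 < sQ → g i < l := by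
    intro i h
    refine hJmin i ?_
    rw [hsQdef] at h
    by_cases hc : m2fin ≤ g J
    · rw [if_pos hc] at h; omega
    · rw [if_neg hc] at h; omega
  have hidx_lt_l : ∀ i, i + 2 ≤ sQ → idxQ i < l := by
    intro i h
    rw [hidx_lt i (by omega)]
    exact hgl2 i (by omega)
  have hQadj : ∀ i, i < sQ → G.Adj (b (idxQ i)) (b (idxQ (i + 1))) := by
    intro i h
    rcases Nat.lt_or_ge (i + 1) sQ with h1 | h1
    · rw [hidx_lt i h, hidx_lt (i + 1) h1]
      exact hgadj i (hgl2 i h1)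
    · rw [hidx_lt i h, hidx_ge (i + 1) h1]
      have hieq : i + 1 = sQ := by omega
      by_cases hcond : m2fin ≤ g J
      · have hsQJ' : sQ = J := by rw [hsQdef, if_pos hcond]
        have hiJ : i = J - 1 := by omega
        have hadjJ := hgadj (J - 1) (hJmin _ (by omega))
        rw [show J - 1 + 1 = J by omega] at hadjJ
        rw [hiJ]
        refine chainB humb hadjJ (le_refl _) ?_ hcond
        exact lt_of_lt_of_le (hJmin _ (by omega)) hm2le'
      · have hsQJ' : sQ = J + 1 := by rw [hsQdef, if_neg hcond]
        have hiJ : i = J := by omega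
        rw [hiJ]
        exact cliqueB2 (g J) m2fin hJspec (not_le.1 hcond)
  have hQidxinc : ∀ i, i < sQ → idxQ i < idxQ (i + 1) := by
    intro i h
    rcases Nat.lt_or_ge (i + 1) sQ with h1 | h1
    · rw [hidx_lt i h, hidx_lt (i + 1) h1]
      exact hginc i (hgl2 i h1)
    · rw [hidx_lt i h, hidx_ge (i + 1) h1]
      by_cases hcond : m2fin ≤ g J
      · have hsQJ' : sQ = J := by rw [hsQdef, if_pos hcond]
        exact lt_of_lt_of_le (hJmin i (by omega)) hm2le'
      · have hsQJ' : sQ = J + 1 := by rw [hsQdef, if_neg hcond]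
        exact lt_of_le_of_lt (hgmono i J (by omega)) (not_le.1 hcond)
  have hQstrict : ∀ i j : ℕ, i < j → j ≤ sQ → idxQ i < idxQ j := by
    intro i j hij hjs
    induction j with
    | zero => omega
    | succ m ih =>
      rcases Nat.lt_or_ge i m with h' | h'
      · exact lt_trans (ih h' (by omega)) (hQidxinc m (by omega))
      · rw [show i = m by omega]
        exact hQidxinc m (by omega)
  have hQnonadj : ∀ i j : ℕ, i + 2 ≤ j → j ≤ sQ → ¬ G.Adj (b (idxQ i)) (b (idxQ j)) := by
    intro i j h2 hjs hAdj
    have hgi_l : g i < l := hgl2 i (by omega)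
    have hile : idxQ i = g i := hidx_lt i (by omega)
    rw [hile] at hAdj
    rcases Nat.lt_or_ge j sQ with hj1 | hj1
    · rw [hidx_lt j hj1] at hAdj
      have hle : g j ≤ g (i + 1) := by
        rw [hgstep i hgi_l]
        exact Mmax _ _ hAdj
      have hlt : g (i + 1) < g (i + 2) := hginc (i + 1) (hgl2 (i + 1) (by omega))
      have hmono2 : g (i + 2) ≤ g j := hgmono (i + 2) j (by omega)
      exact absurd hle (not_le.2 (lt_of_lt_of_le hlt hmono2))
    · rw [hidx_ge j hj1] at hAdj
      have hle : m2fin ≤ g (i + 1) := by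
        rw [hgstep i hgi_l]
        exact Mmax _ _ hAdj
      by_cases hcond : m2fin ≤ g J
      · have hsQJ' : sQ = J := by rw [hsQdef, if_pos hcond]
        have h3 : g (i + 1) < l := hJmin (i + 1) (by omega)
        have h4 : l ≤ g (i + 1) := le_trans hm2le' hle
        exact absurd h4 (not_le.2 h3)
      · have hsQJ' : sQ = J + 1 := by rw [hsQdef, if_neg hcond]
        have h3 : g (i + 1) ≤ g J := hgmono (i + 1) J (by omega)
        have h4 : g J < m2fin := not_le.1 hcond
        have := lt_of_lt_of_le h4 (le_trans hle h3)
        exact lt_irrefl _ this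
  have hgml : g 0 < l := lt_of_le_of_lt hmle' hl'l
  have hg1ge : l' ≤ g 1 := by
    rcases lt_or_eq_of_le hmle' with h | h
    · have hadj1 := cliqueB1 mfin l' h (le_refl l')
      have h5 := hgstep 0 hgml
      rw [show (0:ℕ) + 1 = 1 by norm_num] at h5
      rw [h5]
      exact Mmax _ _ hadj1
    · have h2 := hginc 0 hgml
      have h3 : mfin < g 1 := h2
      rw [← h]
      exact le_of_lt h3
  have hg2gt : l' < g 2 := by
    by_cases hc : g 1 < l
    · exact lt_of_le_of_lt hg1ge (hginc 1 hc)
    · have h2 := hgfreeze 1 hc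
      have h3 : l ≤ g (1 + 1) := by rw [h2]; exact not_lt.1 hc
      have h4 : l' < g (1 + 1) := lt_of_lt_of_le hl'l h3
      exact h4
  have hQD1 : ∀ i, 2 ≤ i → i ≤ sQ → l' < idxQ i := by
    intro i h2 his
    rcases Nat.lt_or_ge i sQ with h | h
    · rw [hidx_lt i h]
      exact lt_of_lt_of_le hg2gt (hgmono 2 i h2)
    · rw [hidx_ge i h]
      exact lt_of_lt_of_le hl'l hm2le'
  -- length bound for the inner path
  have hψchain : ∀ i0, i0 ≤ sQ → ψ (idxQ i0).val = 0 →
      ∀ d, i0 + d ≤ sQ → ψ (idxQ (i0 + d)).val ≤ d := by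
    intro i0 hi0 h0 d
    induction d with
    | zero => intro _; rw [Nat.add_zero]; omega
    | succ m ih =>
      intro hd
      have h1 := ψstep _ _ (hQadj (i0 + m) (by omega))
      have h2 := ih (by omega)
      rw [show i0 + (m + 1) = (i0 + m) + 1 by omega]
      omega
  have hψ0 : ψ (idxQ 0).val = 0 := by
    rw [hidx_lt 0 (by omega), hg0]
    exact ψ0 _ (by have : mfin.val ≤ l'.val := hmle'; omega)
  have hsQq : q - 2 ≤ sQ := by
    have h1 := hψchain 0 (by omega) hψ0 sQ (by omega)
    have h2 : ψ (idxQ sQ).val = q - 2 := by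
      rw [hidx_ge sQ (le_refl _)]
      exact ψfull _ hm2le'
    rw [Nat.zero_add] at h1
    omega
  have hsQ2 : 2 ≤ sQ := by omega
  set n1 : ℕ := if idxQ 1 ≤ l' then 1 else 0 with hn1def
  set n2 : ℕ := if l ≤ idxQ (sQ - 1) then 1 else 0 with hn2def
  have hlenQ : q - 2 + n1 + n2 ≤ sQ := by
    have hbase : ψ (idxQ n1).val = 0 := by
      rw [hn1def]
      split_ifs with hc
      · rw [hidx_lt 1 (by omega)]
        rw [hidx_lt 1 (by omega)] at hc
        exact ψ0 _ (by have : (g 1).val ≤ l'.val := hc; omega)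
      · exact hψ0
    have hn1le : n1 ≤ 1 := by rw [hn1def]; split_ifs <;> omega
    have hn2le : n2 ≤ 1 := by rw [hn2def]; split_ifs <;> omega
    have hend : ψ (idxQ (sQ - n2)).val = q - 2 := by
      rw [hn2def]
      split_ifs with hc
      · exact ψfull _ hc
      · rw [Nat.sub_zero, hidx_ge sQ (le_refl _)]
        exact ψfull _ hm2le'
    have hchain := hψchain n1 (by omega) hbase (sQ - n2 - n1) (by omega)
    rw [show n1 + (sQ - n2 - n1) = sQ - n2 by omega] at hchain
    omega
    -- assemble the cycle
  set t : ℕ := sQ + r with htdef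
  haveI : NeZero t := ⟨by omega⟩
  set z : Fin t → V := fun i => if i.val ≤ sQ then b (idxQ i.val) else pc (sQ + r - i.val)
    with hzdef
  have hzQ : ∀ i : Fin t, i.val ≤ sQ → z i = b (idxQ i.val) := by
    intro i h
    rw [hzdef]; dsimp only; rw [if_pos h]
  have hzP : ∀ i : Fin t, sQ < i.val → z i = pc (sQ + r - i.val) := by
    intro i h
    rw [hzdef]; dsimp only; rw [if_neg (by omega)]
  have hQv0 : b (idxQ 0) = pc 0 := by
    rw [hidx_lt 0 (by omega), hg0]; exact hmeq
  have hQvs : b (idxQ sQ) = pc r := by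
    rw [hidx_ge sQ (le_refl _)]; exact hm2eq
  have hv1 : (1 : Fin t).val = 1 := by
    rw [Fin.val_one']
    exact Nat.mod_eq_of_lt (by omega)
  have haddval : ∀ i : Fin t, ((i + 1 : Fin t)).val = (i.val + 1) % t := by
    intro i
    rw [Fin.add_def, hv1]
  have hsucc : ∀ i : Fin t, i.val + 1 < t → ((i + 1 : Fin t)).val = i.val + 1 := by
    intro i h
    rw [haddval, Nat.mod_eq_of_lt h]
  have hwrap : ∀ i : Fin t, i.val = t - 1 → ((i + 1 : Fin t)).val = 0 := by
    intro i h
    rw [haddval, h, show t - 1 + 1 = t by omega, Nat.mod_self]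
  have hz_adj : ∀ i : Fin t, G.Adj (z i) (z (i + 1)) := by
    intro i
    rcases Nat.lt_or_ge i.val sQ with h1 | h1
    · have hs1 : ((i + 1 : Fin t)).val = i.val + 1 := hsucc i (by omega)
      rw [hzQ i (by omega), hzQ (i + 1) (by omega), hs1]
      exact hQadj i.val h1
    · rcases Nat.eq_or_lt_of_le h1 with h1e | h1l
      · -- i.val = sQ
        have hs1 : ((i + 1 : Fin t)).val = sQ + 1 := by
          rw [hsucc i (by omega), ← h1e]
        rw [hzQ i (by omega), hzP (i + 1) (by omega), hs1, ← h1e, hQvs,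
          show sQ + r - (sQ + 1) = r - 1 by omega]
        have hA := hpcadj (r - 1) (by omega)
        rw [show r - 1 + 1 = r by omega] at hA
        exact hA.symm
      · rcases Nat.lt_or_ge i.val (t - 1) with h2 | h2
        · have hs1 : ((i + 1 : Fin t)).val = i.val + 1 := hsucc i (by omega)
          rw [hzP i h1l, hzP (i + 1) (by rw [hs1]; omega), hs1]
          have hA := hpcadj (sQ + r - i.val - 1) (by omega)
          rw [show sQ + r - i.val - 1 + 1 = sQ + r - i.val by omega] at hA
          rw [show sQ + r - (i.val + 1) = sQ + r - i.val - 1 by omega]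
          exact hA.symm
        · have h2e : i.val = t - 1 := by omega
          have hs0 : ((i + 1 : Fin t)).val = 0 := hwrap i h2e
          rw [hzP i h1l, hzQ (i + 1) (by rw [hs0]; omega), hs0, hQv0,
            show sQ + r - i.val = 1 by omega]
          have hA := hpcadj 0 (by omega)
          rw [Nat.zero_add] at hA
          exact hA.symm
  have hQvinj : ∀ i j : ℕ, i ≤ sQ → j ≤ sQ → b (idxQ i) = b (idxQ j) → i = j := by
    intro i j hi hj hEq
    have hb := binj hEq
    by_contra hne
    rcases Nat.lt_or_ge i j with h | h
    · exact absurd hb (ne_of_lt (hQstrict i j h hj))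
    · exact absurd hb.symm (ne_of_lt (hQstrict j i (by omega) hi))
  have hPnotb : ∀ jj, 1 ≤ jj → jj < r → ∀ u : Fin p, pc jj ≠ b u := by
    intro jj h1 h2 u hEq
    exact hnotb (pc jj) (Pint jj h1 h2) ⟨u, hEq.symm⟩
  have hz_inj : Function.Injective z := by
    intro i j hEq
    rcases Nat.lt_or_ge sQ i.val with hi | hi
    · rcases Nat.lt_or_ge sQ j.val with hj | hj
      · rw [hzP i hi, hzP j hj] at hEq
        have h1 : sQ + r - i.val = sQ + r - j.val := by
          by_contra hne
          rcases Nat.lt_or_ge (sQ + r - i.val) (sQ + r - j.val) with h | h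
          · exact Pinj _ _ h (by omega) hEq
          · exact Pinj _ _ (by omega) (by omega) hEq.symm
        exact Fin.ext (by omega)
      · rw [hzP i hi, hzQ j (by omega)] at hEq
        exact absurd hEq (hPnotb _ (by omega) (by omega) _)
    · rcases Nat.lt_or_ge sQ j.val with hj | hj
      · rw [hzQ i (by omega), hzP j hj] at hEq
        exact absurd hEq.symm (hPnotb _ (by omega) (by omega) _)
      · rw [hzQ i (by omega), hzQ j (by omega)] at hEq
        exact Fin.ext (hQvinj _ _ (by omega) (by omega) hEq)
  -- the chord set
  set chords : Finset (Sym2 V) :=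
    (if idxQ 1 ≤ l' then {s(pc 1, b (idxQ 1))} else ∅) ∪
    (if l ≤ idxQ (sQ - 1) then {s(pc (r - 1), b (idxQ (sQ - 1)))} else ∅) with hchordsdef
  have hchords_card : chords.card ≤ n1 + n2 := by
    rw [hchordsdef, hn1def, hn2def]
    refine le_trans (Finset.card_union_le _ _) ?_
    refine add_le_add ?_ ?_ <;> split_ifs <;> simp
  set cycE : Finset (Sym2 V) := Finset.univ.image (fun m : Fin t => s(z m, z (m + 1)))
    with hcycEdef
  have hmemcyc : ∀ m : Fin t, s(z m, z (m + 1)) ∈ cycE := fun m =>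
    Finset.mem_image_of_mem _ (Finset.mem_univ m)
  -- chord classification
  have hQQ : ∀ i j : Fin t, i.val < j.val → j.val ≤ sQ → G.Adj (z i) (z j) →
      s(z i, z j) ∈ cycE ∪ chords := by
    intro i j hij hj hA
    rcases Nat.lt_or_ge (i.val + 1) j.val with h | h
    · exfalso
      rw [hzQ i (by omega), hzQ j hj] at hA
      exact hQnonadj i.val j.val (by omega) hj hA
    · have hji : j = i + 1 := Fin.ext (by rw [hsucc i (by omega)]; omega)
      rw [hji]
      exact Finset.mem_union_left _ (hmemcyc i)
  have hPP : ∀ i j : Fin t, sQ < i.val → sQ < j.val → i ≠ j → G.Adj (z i) (z j) →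
      s(z i, z j) ∈ cycE ∪ chords := by
    intro i j hi hj hne hA
    rw [hzP i hi, hzP j hj] at hA
    have hiv : i.val < t := i.isLt
    have hjv : j.val < t := j.isLt
    have hvne : i.val ≠ j.val := fun h => hne (Fin.ext h)
    rcases Nat.lt_or_ge i.val j.val with h | h
    · -- a' < a, j = i + 1 possible
      rcases Nat.lt_or_ge (i.val + 1) j.val with h2 | h2
      · exfalso
        exact Pchord (sQ + r - j.val) (sQ + r - i.val) (by omega) (by omega) hA.symm
      · have hji : j = i + 1 := Fin.ext (by rw [hsucc i (by omega)]; omega)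
        rw [hji]
        exact Finset.mem_union_left _ (hmemcyc i)
    · rcases Nat.lt_or_ge (j.val + 1) i.val with h2 | h2
      · exfalso
        exact Pchord (sQ + r - i.val) (sQ + r - j.val) (by omega) (by omega) hA
      · have hij2 : i = j + 1 := Fin.ext (by rw [hsucc j (by omega)]; omega)
        rw [hij2, Sym2.eq_swap]
        exact Finset.mem_union_left _ (hmemcyc j)
  have hQP : ∀ i j : Fin t, i.val ≤ sQ → sQ < j.val → G.Adj (z i) (z j) →
      s(z i, z j) ∈ cycE ∪ chords := by
    intro i j hi hj hA
    have hjj1 : 1 ≤ sQ + r - j.val := by omega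
    have hjj2 : sQ + r - j.val ≤ r - 1 := by omega
    rw [hzQ i hi, hzP j hj] at hA
    rcases le_or_gt (idxQ i.val) l' with h1 | h1
    · have hile : i.val ≤ 1 := by
        by_contra hgt
        exact absurd (hQD1 i.val (by omega) hi) (not_lt.2 h1)
      rcases Nat.lt_or_ge i.val 1 with hi0 | hi1
      · -- i.val = 0
        have hi0e : i.val = 0 := by omega
        rw [hi0e, hQv0] at hA
        have hjje : sQ + r - j.val = 1 := by
          by_contra hne2
          exact Pchord 0 (sQ + r - j.val) (by omega) (by omega) hA
        have hji : i = j + 1 := Fin.ext (by rw [hwrap j (by omega)]; omega)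
        rw [hji, Sym2.eq_swap]
        exact Finset.mem_union_left _ (hmemcyc j)
      · -- i.val = 1
        have hi1e : i.val = 1 := by omega
        rw [hi1e] at hA
        have hS1mem : b (idxQ 1) ∈ S1 := ⟨idxQ 1, by rw [hi1e] at h1; exact h1, rfl⟩
        have hjje : sQ + r - j.val = 1 := by
          by_contra hne2
          exact PadjS1 (sQ + r - j.val) (by omega) (by omega) _ hS1mem hA.symm
        refine Finset.mem_union_right _ ?_
        rw [hchordsdef]
        refine Finset.mem_union_left _ ?_
        rw [if_pos (show idxQ 1 ≤ l' by rw [hi1e] at h1; exact h1)]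
        have hz1 : z i = b (idxQ 1) := by rw [hzQ i hi, hi1e]
        have hz2 : z j = pc 1 := by rw [hzP j hj, hjje]
        rw [hz1, hz2]
        exact Finset.mem_singleton.2 Sym2.eq_swap
    · rcases lt_or_ge (idxQ i.val) l with h2 | h2
      · exfalso
        have hmem := Pint (sQ + r - j.val) (by omega) (by omega)
        exact hLRC (pc (sQ + r - j.val)) hmem (idxQ i.val) h1 h2 hA.symm
      · have hige : sQ - 1 ≤ i.val := by
          by_contra hlt2
          exact absurd (hidx_lt_l i.val (by omega)) (not_lt.2 h2)
        rcases Nat.eq_or_lt_of_le hi with hie | hil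
        · -- i.val = sQ
          rw [hie, hQvs] at hA
          have hjje : sQ + r - j.val = r - 1 := by
            by_contra hne2
            exact Pchord (sQ + r - j.val) r (by omega) (by omega) hA.symm
          have hji : j = i + 1 := Fin.ext (by rw [hsucc i (by omega)]; omega)
          rw [hji]
          exact Finset.mem_union_left _ (hmemcyc i)
        · -- i.val = sQ - 1
          have hie : i.val = sQ - 1 := by omega
          rw [hie] at hA
          have hS2mem : b (idxQ (sQ - 1)) ∈ S2 := ⟨idxQ (sQ - 1), by rw [hie] at h2; exact h2, rfl⟩
          have hjje : sQ + r - j.val = r - 1 := by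
            by_contra hne2
            exact PadjS2 (sQ + r - j.val) (by omega) _ hS2mem hA.symm
          refine Finset.mem_union_right _ ?_
          rw [hchordsdef]
          refine Finset.mem_union_right _ ?_
          rw [if_pos (show l ≤ idxQ (sQ - 1) by rw [hie] at h2; exact h2)]
          have hz1 : z i = b (idxQ (sQ - 1)) := by rw [hzQ i hi, hie]
          have hz2 : z j = pc (r - 1) := by rw [hzP j hj, hjje]
          rw [hz1, hz2]
          exact Finset.mem_singleton.2 Sym2.eq_swap
  have hchordmain : ∀ i j : Fin t, G.Adj (z i) (z j) →
      s(z i, z j) ∈ cycE ∪ chords := by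
    intro i j hA
    rcases le_or_gt i.val sQ with hi | hi
    · rcases le_or_gt j.val sQ with hj | hj
      · rcases lt_trichotomy i.val j.val with h | h | h
        · exact hQQ i j h hj hA
        · exfalso
          have hij : i = j := Fin.ext h
          rw [hij] at hA
          exact G.loopless.irrefl _ hA
        · have hsw := hQQ j i h hi hA.symm
          rwa [Sym2.eq_swap] at hsw
      · exact hQP i j hi hj hA
    · rcases le_or_gt j.val sQ with hj | hj
      · have hsw := hQP j i hj hi hA.symm
        rwa [Sym2.eq_swap] at hsw
      · refine hPP i j hi hj ?_ hA
        intro hEq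
        rw [hEq] at hA
        exact G.loopless.irrefl _ hA
  -- conclude via the counting bound
  have hcount := counting_main G F chords hPI (t := t) (by omega) z hz_inj hz_adj hchordmain
  omega
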